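/- Let n ≥ 1 and A ∈ ℂ^{n×n}. There exists a polynomial d in three variables x, y, S with real coefficients such that for all real x, y, S one has d(x, y, S) = det(S·I − P(x+iy)ᴴP(x+iy)) where P(λ) = λI − A (in particular this determinant is real), and consequently the union of the singular-value surfaces ⋃_{j=1}^n Σ_j = {(x, y, S) ∈ ℝ³ : S is an eigenvalue of P(x+iy)ᴴP(x+iy)} is exactly the zero set {(x,y,S) ∈ ℝ³ : d(x,y,S) = 0}, hence a real algebraic variety. -/

import Mathlib

open Matrix

noncomputable def mvRealPart (p : MvPolynomial (Fin 3) ℂ) : MvPolynomial (Fin 3) ℝ :=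
  p.support.sum fun m => MvPolynomial.monomial m (p.coeff m).re

lemma eval_mvRealPart (p : MvPolynomial (Fin 3) ℂ) (v : Fin 3 → ℝ) :
    MvPolynomial.eval v (mvRealPart p) =
      (MvPolynomial.eval (fun i => (v i : ℂ)) p).re := by
  rw [mvRealPart, map_sum, MvPolynomial.eval_eq' (fun i => (v i : ℂ)) p, Complex.re_sum]
  refine Finset.sum_congr rfl fun m _ => ?_
  rw [MvPolynomial.eval_monomial, Finsupp.prod_fintype _ _ (fun i => pow_zero _)]
  have h : (∏ i, ((v i : ℂ)) ^ m i) = ((∏ i, v i ^ m i : ℝ) : ℂ) := by push_cast; rfl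
  rw [h, Complex.mul_re, Complex.ofReal_re, Complex.ofReal_im, mul_zero, sub_zero]

lemma det_smul_one_sub_eq_prod {m : Type*} [Fintype m] [DecidableEq m]
    {M : Matrix m m ℂ} (hM : M.IsHermitian) (S : ℝ) :
    Matrix.det ((S : ℂ) • (1 : Matrix m m ℂ) - M) =
      ∏ i, ((S : ℂ) - (hM.eigenvalues i : ℂ)) := by
  set U : Matrix m m ℂ := (hM.eigenvectorUnitary : Matrix m m ℂ) with hUdef
  have hU : U * star U = 1 := Matrix.mem_unitaryGroup_iff.mp hM.eigenvectorUnitary.2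
  have key : (S : ℂ) • (1 : Matrix m m ℂ) - M =
      U * ((S : ℂ) • (1 : Matrix m m ℂ) - Matrix.diagonal (RCLike.ofReal ∘ hM.eigenvalues))
        * star U := by
    rw [Matrix.mul_sub, Matrix.sub_mul, Matrix.mul_smul, Matrix.mul_one,
      Matrix.smul_mul, hU]
    exact congrArg (fun X => (S : ℂ) • (1 : Matrix m m ℂ) - X)
      (hM.spectral_theorem.trans (Unitary.conjStarAlgAut_apply _ _))
  rw [key, Matrix.det_mul_right_comm, hU, Matrix.one_mul]
  have h1 : (S : ℂ) • (1 : Matrix m m ℂ) = Matrix.diagonal fun _ => (S : ℂ) := by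
    rw [Matrix.smul_one_eq_diagonal]
  rw [h1, Matrix.diagonal_sub, Matrix.det_diagonal]
  simp [RCLike.ofReal_alg]

theorem exists_real_polynomial_det_singular_surfaces
    {n : ℕ} (hn : 1 ≤ n) (A : Matrix (Fin n) (Fin n) ℂ) :
    ∃ d : MvPolynomial (Fin 3) ℝ,
      ∀ x y S : ℝ,
        ((MvPolynomial.eval ![x, y, S] d : ℝ) : ℂ) =
            Matrix.det ((S : ℂ) • (1 : Matrix (Fin n) (Fin n) ℂ) -
              (((x : ℂ) + y * Complex.I) • (1 : Matrix (Fin n) (Fin n) ℂ) - A)ᴴ *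
                (((x : ℂ) + y * Complex.I) • (1 : Matrix (Fin n) (Fin n) ℂ) - A)) ∧
        ((∃ i, (Matrix.isHermitian_conjTranspose_mul_self
            (((x : ℂ) + y * Complex.I) • (1 : Matrix (Fin n) (Fin n) ℂ) - A)).eigenvalues i = S)
          ↔ MvPolynomial.eval ![x, y, S] d = 0) := by
  classical
  let lam : MvPolynomial (Fin 3) ℂ :=
    MvPolynomial.X 0 + MvPolynomial.X 1 * MvPolynomial.C Complex.I
  let lamBar : MvPolynomial (Fin 3) ℂ :=
    MvPolynomial.X 0 - MvPolynomial.X 1 * MvPolynomial.C Complex.I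
  let Pm : Matrix (Fin n) (Fin n) (MvPolynomial (Fin 3) ℂ) :=
    lam • 1 - A.map MvPolynomial.C
  let Pc : Matrix (Fin n) (Fin n) (MvPolynomial (Fin 3) ℂ) :=
    lamBar • 1 - Aᴴ.map MvPolynomial.C
  let D : MvPolynomial (Fin 3) ℂ :=
    Matrix.det ((MvPolynomial.X 2 : MvPolynomial (Fin 3) ℂ) • 1 - Pc * Pm)
  refine ⟨mvRealPart D, fun x y S => ?_⟩
  set P : Matrix (Fin n) (Fin n) ℂ :=
    ((x : ℂ) + y * Complex.I) • (1 : Matrix (Fin n) (Fin n) ℂ) - A with hP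
  set N : Matrix (Fin n) (Fin n) ℂ :=
    (S : ℂ) • (1 : Matrix (Fin n) (Fin n) ℂ) - Pᴴ * P with hN
  have hw : (fun i => ((![x, y, S] : Fin 3 → ℝ) i : ℂ)) = ![(x:ℂ), (y:ℂ), (S:ℂ)] := by
    funext i; fin_cases i <;> simp
  -- evaluation of D is det N
  have hevD : MvPolynomial.eval (fun i => ((![x, y, S] : Fin 3 → ℝ) i : ℂ)) D = N.det := by
    rw [hw]
    show (MvPolynomial.eval ![(x:ℂ), (y:ℂ), (S:ℂ)]).toFun _ = _
    rw [RingHom.toFun_eq_coe, RingHom.map_det]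
    congr 1
    ext i j
    simp only [RingHom.mapMatrix_apply, Matrix.map_apply, Matrix.sub_apply, Matrix.smul_apply,
      Matrix.mul_apply, smul_eq_mul, map_sub, _root_.map_mul, map_sum, hN, hP, Pm, Pc, lam,
      lamBar, MvPolynomial.eval_X, MvPolynomial.eval_C, map_add, Matrix.conjTranspose_apply,
      Matrix.one_apply, Matrix.cons_val_zero, Matrix.cons_val_one, Matrix.head_cons, apply_ite, _root_.map_one, _root_.map_zero]
    have h2 : (![(x:ℂ), (y:ℂ), (S:ℂ)] : Fin 3 → ℂ) 2 = (S:ℂ) := rfl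
    rw [h2]
    congr 1
    refine Finset.sum_congr rfl fun k _ => ?_
    rcases eq_or_ne k i with rfl | hki
    · simp only [if_pos rfl, eq_self_iff_true, if_true, Complex.star_def, map_sub, map_add, _root_.map_mul,
        Complex.conj_ofReal, Complex.conj_I, _root_.map_one]
      ring
    · simp [hki, Ne.symm hki]
  have hHerm : N.IsHermitian := by
    have h1 : (Pᴴ * P).IsHermitian := Matrix.isHermitian_conjTranspose_mul_self P
    have h2 : ((S : ℂ) • (1 : Matrix (Fin n) (Fin n) ℂ)).IsHermitian := by
      unfold Matrix.IsHermitian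
      rw [Matrix.conjTranspose_smul, Matrix.conjTranspose_one, Complex.star_def,
        Complex.conj_ofReal]
    exact h2.sub h1
  have hsd : star N.det = N.det := by rw [← Matrix.det_conjTranspose, hHerm.eq]
  have hreal : ((N.det.re : ℝ) : ℂ) = N.det := Complex.conj_eq_iff_re.mp hsd
  have heval : ((MvPolynomial.eval ![x, y, S] (mvRealPart D) : ℝ) : ℂ) = N.det := by
    rw [eval_mvRealPart, hevD, hreal]
  have hMeq : Pᴴ * P =
      (((x : ℂ) + y * Complex.I) • (1 : Matrix (Fin n) (Fin n) ℂ) - A)ᵀ.map (starRingEnd ℂ) *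
        (((x : ℂ) + y * Complex.I) • (1 : Matrix (Fin n) (Fin n) ℂ) - A) := rfl
  constructor
  · exact heval
  · have hMherm := Matrix.isHermitian_conjTranspose_mul_self P
    have hdet : N.det = ∏ i, ((S : ℂ) - (hMherm.eigenvalues i : ℂ)) :=
      det_smul_one_sub_eq_prod hMherm S
    constructor
    · rintro ⟨i, hi⟩
      have : N.det = 0 := by
        rw [hdet]
        exact Finset.prod_eq_zero (Finset.mem_univ i) (by rw [hi]; ring)
      have := heval.trans this
      exact_mod_cast this
    · intro h0
      have : N.det = 0 := by rw [← heval, h0]; simp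
      rw [hdet] at this
      obtain ⟨i, -, hi⟩ := Finset.prod_eq_zero_iff.mp this
      exact ⟨i, by exact_mod_cast sub_eq_zero.mp hi |>.symm⟩
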